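/- Let S be a pseudo-regular subspace of a Krein space (H,J). The group U_S = {U ∈ U_J : U(S) = S} of J-unitary operators leaving S invariant acts transitively on the set Q_S of J-normal projections with range S: for any Q, Q₀ ∈ Q_S there exists U ∈ U_S with Q = U Q₀ U^#. -/

import Mathlib

open ContinuousLinearMap

variable {H : Type*} [NormedAddCommGroup H] [InnerProductSpace ℂ H] [CompleteSpace H]

/-- The `J`-adjoint `T^# = J T* J`. -/
noncomputable def sharp (J T : H →L[ℂ] H) : H →L[ℂ] H :=
  J ∘L (ContinuousLinearMap.adjoint T) ∘L J

private theorem key_alg {R : Type*} [Ring R] (q r a b : R)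
    (hq : q*q = q) (hr : r*r = r) (hqr : q*r = r) (hrq : r*q = q)
    (ha : a*a = a) (hb : b*b = b) (hab : a*b = a) (hba : b*a = b)
    (haq : a*q = q*a) (hbr : b*r = r*b) :
    ((-1 + q + r + a + b + a*r - q*a - q*b - r*b) *
     (-1 + q + r + a + b + b*q - q*a - r*a - r*b) = 1) ∧
    ((-1 + q + r + a + b + b*q - q*a - r*a - r*b) *
     (-1 + q + r + a + b + a*r - q*a - q*b - r*b) = 1) ∧
    ((-1 + q + r + a + b + a*r - q*a - q*b - r*b) * r =
      q * (-1 + q + r + a + b + a*r - q*a - q*b - r*b)) := by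
  have lq : ∀ t : R, q*(q*t) = q*t := fun t => by rw [← mul_assoc, hq]
  have lr : ∀ t : R, r*(r*t) = r*t := fun t => by rw [← mul_assoc, hr]
  have lqr : ∀ t : R, q*(r*t) = r*t := fun t => by rw [← mul_assoc, hqr]
  have lrq : ∀ t : R, r*(q*t) = q*t := fun t => by rw [← mul_assoc, hrq]
  have la : ∀ t : R, a*(a*t) = a*t := fun t => by rw [← mul_assoc, ha]
  have lb : ∀ t : R, b*(b*t) = b*t := fun t => by rw [← mul_assoc, hb]
  have lab : ∀ t : R, a*(b*t) = a*t := fun t => by rw [← mul_assoc, hab]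
  have lba : ∀ t : R, b*(a*t) = b*t := fun t => by rw [← mul_assoc, hba]
  have laq : ∀ t : R, a*(q*t) = q*(a*t) := fun t => by
    rw [← mul_assoc, haq, mul_assoc]
  have lbr : ∀ t : R, b*(r*t) = r*(b*t) := fun t => by
    rw [← mul_assoc, hbr, mul_assoc]
  have hqar : q*(a*r) = a*r := by rw [← mul_assoc, ← haq, mul_assoc, hqr]
  have lqar : ∀ t : R, q*(a*(r*t)) = a*(r*t) := fun t => by
    rw [← mul_assoc, ← mul_assoc, ← haq, mul_assoc, mul_assoc, lqr]
  have hrbq : r*(b*q) = b*q := by rw [← mul_assoc, ← hbr, mul_assoc, hrq]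
  have lrbq : ∀ t : R, r*(b*(q*t)) = b*(q*t) := fun t => by
    rw [← mul_assoc, ← mul_assoc, ← hbr, mul_assoc, mul_assoc, lrq]
  have harb : a*(r*b) = a*r := by rw [← hbr, ← mul_assoc, hab]
  have larb : ∀ t : R, a*(r*(b*t)) = a*(r*t) := fun t => by
    rw [← lbr, ← mul_assoc, hab]
  have hbqa : b*(q*a) = b*q := by rw [← haq, ← mul_assoc, hba]
  have lbqa : ∀ t : R, b*(q*(a*t)) = b*(q*t) := fun t => by
    rw [← laq, ← mul_assoc, hba]
  refine ⟨?_, ?_, ?_⟩ <;>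
  · simp only [mul_add, add_mul, sub_mul, mul_sub, mul_neg, neg_mul, one_mul, mul_one,
      mul_assoc, hq, hr, hqr, hrq, ha, hb, hab, hba, haq, hbr,
      lq, lr, lqr, lrq, la, lb, lab, lba, laq, lbr,
      hqar, lqar, hrbq, lrbq, harb, larb, hbqa, lbqa, neg_neg]
    abel

/-- The group `U_S` of `J`-unitaries leaving `S` invariant acts transitively on the set of
`J`-normal projections with range `S`. -/
theorem stmt12 (J : H →L[ℂ] H)
    (hJsa : ContinuousLinearMap.adjoint J = J) (hJ2 : J ∘L J = 1)
    (S : Submodule ℂ H) (Q Q₀ : H →L[ℂ] H)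
    (hQ : Q ∘L Q = Q) (hQn : Q ∘L sharp J Q = sharp J Q ∘L Q)
    (hQS : LinearMap.range (Q : H →ₗ[ℂ] H) = S)
    (hQ₀ : Q₀ ∘L Q₀ = Q₀) (hQ₀n : Q₀ ∘L sharp J Q₀ = sharp J Q₀ ∘L Q₀)
    (hQ₀S : LinearMap.range (Q₀ : H →ₗ[ℂ] H) = S) :
    ∃ U : H →L[ℂ] H, U ∘L sharp J U = 1 ∧ sharp J U ∘L U = 1 ∧
      Submodule.map (U : H →ₗ[ℂ] H) S = S ∧ Q = U ∘L Q₀ ∘L sharp J U := by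
  have hJ2' : ∀ z : H, J (J z) = z := fun z => by
    have := ContinuousLinearMap.ext_iff.1 hJ2 z
    simpa using this
  have sharp_comp : ∀ X Y : H →L[ℂ] H, sharp J (X ∘L Y) = sharp J Y ∘L sharp J X := by
    intro X Y
    ext x
    simp [sharp, ContinuousLinearMap.adjoint_comp, hJ2']
  have sharp_sharp : ∀ X : H →L[ℂ] H, sharp J (sharp J X) = X := by
    intro X
    ext x
    simp [sharp, ContinuousLinearMap.adjoint_comp, hJsa,
      ContinuousLinearMap.adjoint_adjoint, hJ2']
  have sharp_one : sharp J 1 = 1 := by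
    ext x
    simp [sharp, ContinuousLinearMap.one_def, ContinuousLinearMap.adjoint_id, hJ2']
  have sharp_add : ∀ X Y : H →L[ℂ] H, sharp J (X + Y) = sharp J X + sharp J Y := by
    intro X Y
    ext x
    simp [sharp]
  have sharp_neg : ∀ X : H →L[ℂ] H, sharp J (-X) = -(sharp J X) := by
    intro X
    ext x
    simp [sharp]
  have sharp_sub : ∀ X Y : H →L[ℂ] H, sharp J (X - Y) = sharp J X - sharp J Y := by
    intro X Y
    simp [sub_eq_add_neg, sharp_add, sharp_neg]
  set a := sharp J Q with ha_def
  set b := sharp J Q₀ with hb_def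
  -- same range relations
  have hqr : Q ∘L Q₀ = Q₀ := by
    ext x
    have hmem : Q₀ x ∈ LinearMap.range (Q : H →ₗ[ℂ] H) := by
      rw [hQS, ← hQ₀S]; exact ⟨x, rfl⟩
    obtain ⟨y, hy⟩ := hmem
    have hQy := ContinuousLinearMap.ext_iff.1 hQ y
    simp only [ContinuousLinearMap.comp_apply, ContinuousLinearMap.coe_coe] at hQy ⊢
    rw [← hy]; exact hQy
  have hrq : Q₀ ∘L Q = Q := by
    ext x
    have hmem : Q x ∈ LinearMap.range (Q₀ : H →ₗ[ℂ] H) := by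
      rw [hQ₀S, ← hQS]; exact ⟨x, rfl⟩
    obtain ⟨y, hy⟩ := hmem
    have hQy := ContinuousLinearMap.ext_iff.1 hQ₀ y
    simp only [ContinuousLinearMap.comp_apply, ContinuousLinearMap.coe_coe] at hQy ⊢
    rw [← hy]; exact hQy
  -- relations in multiplicative notation
  have mul_def' : ∀ X Y : H →L[ℂ] H, X * Y = X ∘L Y := fun _ _ => rfl
  have raa : a * a = a := by
    rw [mul_def', ha_def, ← sharp_comp, hQ]
  have rbb : b * b = b := by
    rw [mul_def', hb_def, ← sharp_comp, hQ₀]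
  have rab : a * b = a := by
    rw [mul_def', ha_def, hb_def, ← sharp_comp, hrq]
  have rba : b * a = b := by
    rw [mul_def', ha_def, hb_def, ← sharp_comp, hqr]
  have raq : a * Q = Q * a := by
    rw [mul_def', mul_def']; exact hQn.symm
  have rbr : b * Q₀ = Q₀ * b := by
    rw [mul_def', mul_def']; exact hQ₀n.symm
  obtain ⟨h1, h2, h3⟩ := key_alg Q Q₀ a b
    (by rw [mul_def']; exact hQ) (by rw [mul_def']; exact hQ₀)
    (by rw [mul_def']; exact hqr) (by rw [mul_def']; exact hrq)
    raa rbb rab rba raq rbr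
  set U : H →L[ℂ] H := -1 + Q + Q₀ + a + b + a*Q₀ - Q*a - Q*b - Q₀*b with hU_def
  set V : H →L[ℂ] H := -1 + Q + Q₀ + a + b + b*Q - Q*a - Q₀*a - Q₀*b with hV_def
  have hVU : sharp J U = V := by
    rw [hU_def, hV_def]
    rw [sharp_sub, sharp_sub, sharp_sub, sharp_add, sharp_add, sharp_add, sharp_add,
      sharp_add, sharp_neg, sharp_one]
    rw [show a * Q₀ = a ∘L Q₀ from rfl, show Q * a = Q ∘L a from rfl,
      show Q * b = Q ∘L b from rfl, show Q₀ * b = Q₀ ∘L b from rfl]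
    rw [sharp_comp, sharp_comp, sharp_comp, sharp_comp]
    rw [← ha_def, ← hb_def, sharp_sharp, sharp_sharp]
    show _ = -1 + Q + Q₀ + a + b + b ∘L Q - Q ∘L a - Q₀ ∘L a - Q₀ ∘L b
    abel
  refine ⟨U, ?_, ?_, ?_, ?_⟩
  · rw [hVU, ← mul_def']; exact h1
  · rw [hVU, ← mul_def']; exact h2
  · -- Submodule.map U S = S
    have h4 : Q₀ * V = V * Q := by
      calc Q₀ * V = (V * U) * (Q₀ * V) := by rw [h2, one_mul]
        _ = V * ((U * Q₀) * V) := by noncomm_ring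
        _ = V * ((Q * U) * V) := by rw [h3]
        _ = (V * Q) * (U * V) := by noncomm_ring
        _ = V * Q := by rw [h1, mul_one]
    apply le_antisymm
    · rintro _ ⟨x, hx, rfl⟩
      rw [← hQ₀S] at hx
      obtain ⟨y, rfl⟩ := hx
      have := ContinuousLinearMap.ext_iff.1 h3 y
      simp only [ContinuousLinearMap.mul_apply] at this
      rw [ContinuousLinearMap.coe_coe, ContinuousLinearMap.coe_coe, this]
      rw [← hQS]
      exact ⟨U y, rfl⟩
    · intro x hx
      rw [← hQS] at hx
      obtain ⟨y, rfl⟩ := hx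
      refine ⟨V (Q y), ?_, ?_⟩
      · have := ContinuousLinearMap.ext_iff.1 h4 y
        simp only [ContinuousLinearMap.mul_apply] at this
        rw [← this, ← hQ₀S]
        exact ⟨V y, rfl⟩
      · have hUV := ContinuousLinearMap.ext_iff.1 h1 (Q y)
        simp only [ContinuousLinearMap.mul_apply, ContinuousLinearMap.one_apply] at hUV
        exact hUV
  · -- Q = U ∘L Q₀ ∘L sharp J U
    rw [hVU]
    have : U * Q₀ * V = Q := by
      calc U * Q₀ * V = (Q * U) * V := by rw [h3]
        _ = Q * (U * V) := by rw [mul_assoc]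
        _ = Q := by rw [h1, mul_one]
    rw [← this]
    rfl
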